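/- Let n ≥ 2 and let r be an integer with 1 ≤ r ≤ ⌊n/2⌋. Define the vector w ∈ ℚⁿ by w_i = 0 for 1 ≤ i ≤ r−1, w_i = −1 for r ≤ i ≤ n−r, w_{n−r+1} = n−2r+1, and w_i = 0 for n−r+2 ≤ i ≤ n. Then B_n w = (r−2) w; that is, w is an eigenvector of B_n = D_n + T_n with eigenvalue r−2. -/

import Mathlib

/-- The quotient matrix `B_n = D_n + T_n` of the pancake graph `P(n)`, over `ℚ`
(one-based index `i` corresponds to `i−1 : Fin n`): `D_n` is diagonal with entries
`n−1−i` and `(T_n)_{ij} = 1` iff `i + j ≥ n + 1`. -/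
def Bn (n : ℕ) : Matrix (Fin n) (Fin n) ℚ :=
  Matrix.diagonal (fun i : Fin n => (n : ℚ) - 2 - i.val)
    + Matrix.of (fun i j : Fin n => if n ≤ i.val + j.val + 1 then 1 else 0)

def wv (n r : ℕ) (j : ℕ) : ℚ :=
  if j + 1 < r then 0 else if j + 1 ≤ n - r then -1
  else if j + 1 = n - r + 1 then (n : ℚ) - 2 * r + 1 else 0

lemma sum_tail (n r k : ℕ) (hr : 1 ≤ r) (hrn : 2 * r ≤ n) (hk : n - r < k) :
    ∑ j ∈ Finset.Ico k n, wv n r j = 0 := by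
  apply Finset.sum_eq_zero
  intro j hj
  simp only [Finset.mem_Ico] at hj
  have h1 : ¬ j + 1 < r := by omega
  have h2 : ¬ j + 1 ≤ n - r := by omega
  have h3 : j + 1 ≠ n - r + 1 := by omega
  simp [wv, h1, h2, h3]
  intro h; omega

lemma sum_mid (n r k : ℕ) (hr : 1 ≤ r) (hrn : 2 * r ≤ n) (hk1 : r - 1 ≤ k)
    (hk2 : k ≤ n - r) :
    ∑ j ∈ Finset.Ico k n, wv n r j = (k : ℚ) - r + 1 := by
  rw [← Finset.sum_Ico_consecutive _ hk2 (by omega : n - r ≤ n)]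
  have hA : ∑ j ∈ Finset.Ico k (n - r), wv n r j = -(((n - r - k : ℕ) : ℚ)) := by
    have : ∀ j ∈ Finset.Ico k (n - r), wv n r j = -1 := by
      intro j hj
      simp only [Finset.mem_Ico] at hj
      have h1 : ¬ j + 1 < r := by omega
      have h2 : j + 1 ≤ n - r := by omega
      simp [wv, h1, h2]
    rw [Finset.sum_congr rfl this, Finset.sum_const, Nat.card_Ico]
    simp
  have hB : ∑ j ∈ Finset.Ico (n - r) n, wv n r j = (n : ℚ) - 2 * r + 1 := by
    rw [Finset.sum_eq_sum_Ico_succ_bot (by omega : n - r < n)]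
    rw [sum_tail n r (n - r + 1) hr hrn (by omega)]
    have h1 : ¬ (n - r) + 1 < r := by omega
    have h2 : ¬ (n - r) + 1 ≤ n - r := by omega
    have h3 : (n - r) + 1 = n - r + 1 := rfl
    simp [wv, h1, h2, h3]
  rw [hA, hB]
  rw [Nat.cast_sub (by omega : k ≤ n - r), Nat.cast_sub (by omega : r ≤ n)]
  ring

lemma sum_low (n r k : ℕ) (hr : 1 ≤ r) (hrn : 2 * r ≤ n) (hk : k ≤ r - 1) :
    ∑ j ∈ Finset.Ico k n, wv n r j = 0 := by
  rw [← Finset.sum_Ico_consecutive _ hk (by omega : r - 1 ≤ n)]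
  have hA : ∑ j ∈ Finset.Ico k (r - 1), wv n r j = 0 := by
    apply Finset.sum_eq_zero
    intro j hj
    simp only [Finset.mem_Ico] at hj
    have h1 : j + 1 < r := by omega
    simp [wv, h1]
  rw [hA, sum_mid n r (r - 1) hr hrn le_rfl (by omega)]
  rw [Nat.cast_sub hr]
  ring


/-- Let `n ≥ 2` and `1 ≤ r ≤ ⌊n/2⌋`.  The vector `w` with (one-based)
entries `w_i = 0` for `i ≤ r−1`, `w_i = −1` for `r ≤ i ≤ n−r`, `w_{n−r+1} = n−2r+1`,
and `w_i = 0` for `i ≥ n−r+2`, is an eigenvector of `B_n` with eigenvalue `r−2`. -/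
theorem stmt5 (n r : ℕ) (hn : 2 ≤ n) (hr : 1 ≤ r) (hrn : r ≤ n / 2) :
    (Bn n).mulVec (fun i : Fin n =>
        if i.val + 1 < r then 0
        else if i.val + 1 ≤ n - r then -1
        else if i.val + 1 = n - r + 1 then (n : ℚ) - 2 * r + 1 else 0)
      = ((r : ℚ) - 2) • (fun i : Fin n =>
        if i.val + 1 < r then 0
        else if i.val + 1 ≤ n - r then -1
        else if i.val + 1 = n - r + 1 then (n : ℚ) - 2 * r + 1 else 0) := by
  have hrn' : 2 * r ≤ n := by omega
  have hw : (fun i : Fin n =>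
        if i.val + 1 < r then (0:ℚ)
        else if i.val + 1 ≤ n - r then -1
        else if i.val + 1 = n - r + 1 then (n : ℚ) - 2 * r + 1 else 0)
      = fun j : Fin n => wv n r j.val := rfl
  rw [hw]
  funext i
  have hi : i.val < n := i.isLt
  rw [Bn, Matrix.add_mulVec]
  simp only [Pi.add_apply, Matrix.mulVec_diagonal, Pi.smul_apply, smul_eq_mul]
  have hT : (Matrix.of (fun i j : Fin n => if n ≤ i.val + j.val + 1 then (1:ℚ) else 0)).mulVec
      (fun j : Fin n => wv n r j.val) i = ∑ j ∈ Finset.Ico (n - 1 - i.val) n, wv n r j := by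
    rw [Matrix.mulVec, dotProduct]
    have step1 : ∀ j : Fin n, (Matrix.of (fun i j : Fin n => if n ≤ i.val + j.val + 1 then (1:ℚ) else 0)) i j * wv n r j.val
        = if n - 1 - i.val ≤ j.val then wv n r j.val else 0 := by
      intro j
      have : (n ≤ i.val + j.val + 1) ↔ (n - 1 - i.val ≤ j.val) := by omega
      simp only [Matrix.of_apply, this]
      split <;> simp
    rw [Finset.sum_congr rfl (fun j _ => step1 j)]
    rw [Fin.sum_univ_eq_sum_range (fun j => if n - 1 - i.val ≤ j then wv n r j else 0) n]
    rw [← Finset.sum_filter]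
    congr 1
    ext a
    simp only [Finset.mem_filter, Finset.mem_range, Finset.mem_Ico]
    omega
  show ((n:ℚ) - 2 - i.val) * _ + _ = _
  rw [hT]
  by_cases h1 : i.val + 1 < r
  · have hk : n - r < n - 1 - i.val := by omega
    rw [sum_tail n r _ hr hrn' hk]
    simp [wv, h1]
  · by_cases h2 : i.val + 1 ≤ n - r
    · have := sum_mid n r (n - 1 - i.val) hr hrn' (by omega) (by omega)
      rw [this]
      have hc : ((n - 1 - i.val : ℕ) : ℚ) = (n : ℚ) - 1 - i.val := by
        rw [Nat.cast_sub (by omega : i.val ≤ n - 1), Nat.cast_sub (by omega : 1 ≤ n)]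
        simp
      rw [hc]
      simp only [wv, h1, if_neg, h2, if_pos, if_false]
      ring
    · by_cases h3 : i.val + 1 = n - r + 1
      · have hiv : i.val = n - r := by omega
        have := sum_mid n r (n - 1 - i.val) hr hrn' (by omega) (by omega)
        rw [this]
        have hc1 : ((n - 1 - i.val : ℕ) : ℚ) = (r : ℚ) - 1 := by
          have : n - 1 - i.val = r - 1 := by omega
          rw [this, Nat.cast_sub hr]
          simp
        have hc2 : (i.val : ℚ) = (n : ℚ) - r := by
          rw [hiv, Nat.cast_sub (by omega : r ≤ n)]
        rw [hc1, hc2]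
        simp only [wv, h1, h2, h3, if_neg, if_pos, if_false]
        ring
      · have hk : n - 1 - i.val ≤ r - 1 := by omega
        rw [sum_low n r _ hr hrn' hk]
        simp [wv, h1, h2, h3]
        rw [if_neg (by omega), if_neg (by omega)]
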